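/- arXiv:1803.00901 — 2 statements merged into one kernel-verified Lean document; each statement's English description precedes it below -/
import Mathlib

section
/- Let Q be a locally finite quiver and C a reduced cycle in Q. Then σ(C) = 1 (C has exactly one source) if and only if some cyclic rotation of C has the form p q⁻¹ where p and q are nontrivial (directed) paths from a common vertex a to a common vertex b; i.e., C forms a contour. -/
namespace BQ

/-- A quiver: vertices, arrows, start and end maps. -/
structure Quiv where
  V : Type
  A : Type
  s : A → V
  t : A → V

/-- A letter of a walk: an arrow traversed forwards, or a formal inverse. -/
inductive Letter (Q : Quiv) : Type
  | fwd : Q.A → Letter Q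
  | bwd : Q.A → Letter Q

variable {Q : Quiv}

def Letter.src : Letter Q → Q.V
  | .fwd a => Q.s a
  | .bwd a => Q.t a

def Letter.tgt : Letter Q → Q.V
  | .fwd a => Q.t a
  | .bwd a => Q.s a

def Letter.inv : Letter Q → Letter Q
  | .fwd a => .bwd a
  | .bwd a => .fwd a

def Letter.isFwd : Letter Q → Bool
  | .fwd _ => true
  | .bwd _ => false

/-- `IsWalk Q w x y` : the list of letters `w` is a composable walk from `x` to `y`. -/
def IsWalk (Q : Quiv) (w : List (Letter Q)) (x y : Q.V) : Prop :=
  List.Chain' (fun c d => c.tgt = d.src) w ∧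
  (match w with
   | [] => x = y
   | c :: _ => c.src = x) ∧
  (match w.getLast? with
   | none => x = y
   | some c => c.tgt = y)

/-- Formal inverse of a walk. -/
def wInv (Q : Quiv) (w : List (Letter Q)) : List (Letter Q) := (w.map Letter.inv).reverse

/-- The walk associated to a directed path (a list of arrows). -/
def pW (Q : Quiv) (p : List Q.A) : List (Letter Q) := p.map Letter.fwd

/-- `p` is a directed path from `x` to `y`. -/
def IsDirPath (Q : Quiv) (p : List Q.A) (x y : Q.V) : Prop := IsWalk Q (pW Q p) x y

/-- `Q` has no (nontrivial) oriented cycles. -/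
def Triangular (Q : Quiv) : Prop := ∀ (p : List Q.A) (x : Q.V), IsDirPath Q p x x → p = []

/-- `w` is a (nontrivial closed) cycle at `x`. -/
def IsCycleAt (Q : Quiv) (w : List (Letter Q)) (x : Q.V) : Prop := w ≠ [] ∧ IsWalk Q w x x

/-- cyclic successor index -/
def nextIdx {n : ℕ} (i : Fin n) : Fin n := ⟨(i.1 + 1) % n, Nat.mod_lt _ i.pos⟩

/-- index `i` is a source position of the cyclically-read walk `w`. -/
def srcIdxB (Q : Quiv) (w : List (Letter Q)) (i : Fin w.length) : Bool :=
  !(w.get i).isFwd && (w.get (nextIdx i)).isFwd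

/-- index `i` is a sink position of the cyclically-read walk `w`. -/
def sinkIdxB (Q : Quiv) (w : List (Letter Q)) (i : Fin w.length) : Bool :=
  (w.get i).isFwd && !(w.get (nextIdx i)).isFwd

/-- `σ(w)`: number of sources of the cycle `w`. -/
def sigmaC (Q : Quiv) (w : List (Letter Q)) : ℕ :=
  ((List.finRange w.length).filter (fun i => srcIdxB Q w i)).length

/-- number of sinks of the cycle `w`. -/
def sinkCount (Q : Quiv) (w : List (Letter Q)) : ℕ :=
  ((List.finRange w.length).filter (fun i => sinkIdxB Q w i)).length

/-- `w` is reduced as a cycle (cyclically no immediate cancellation). -/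
def IsReducedCyc (Q : Quiv) (w : List (Letter Q)) : Prop :=
  ∀ i : Fin w.length, w.get (nextIdx i) ≠ (w.get i).inv

/-- `w` is reduced as a walk. -/
def IsReducedWalk (Q : Quiv) (w : List (Letter Q)) : Prop :=
  List.Chain' (fun c d => d ≠ c.inv) w

/-- `v` is a source of the cycle `w`. -/
def IsSourceOf (Q : Quiv) (w : List (Letter Q)) (v : Q.V) : Prop :=
  ∃ i : Fin w.length, srcIdxB Q w i = true ∧ (w.get i).tgt = v

/-- `v` is a sink of the cycle `w`. -/
def IsSinkOf (Q : Quiv) (w : List (Letter Q)) (v : Q.V) : Prop :=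
  ∃ i : Fin w.length, sinkIdxB Q w i = true ∧ (w.get i).tgt = v

/-- the cycle `w` is simple: its vertices are pairwise distinct. -/
def IsSimple (Q : Quiv) (w : List (Letter Q)) : Prop :=
  Function.Injective (fun i : Fin w.length => (w.get i).tgt)

/-- `n`-fold repetition of a walk. -/
def repW {α : Type} (n : ℕ) (w : List α) : List α := (List.replicate n w).flatten

/-- Linear combinations of paths with coefficients in `k`. -/
abbrev Lin (Q : Quiv) (k : Type) [Semiring k] := (List Q.A) →₀ k

/-- `ρ` is a minimal relation of the bound quiver `(Q, I)` from `x` to `y`. -/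
def MinRel (Q : Quiv) (k : Type) [Field k] (I : Set (Lin Q k)) (ρ : Lin Q k) (x y : Q.V) :
    Prop :=
  ρ ∈ I ∧ 2 ≤ ρ.support.card ∧
  (∀ p ∈ ρ.support, IsDirPath Q p x y ∧ 2 ≤ p.length) ∧
  ∀ J : Finset (List Q.A), J ⊂ ρ.support → J.Nonempty →
    (J.sum fun p => Finsupp.single p (ρ p)) ∉ I

/-- One elementary step of natural homotopy. -/
inductive NatStep (Q : Quiv) (k : Type) [Field k] (I : Set (Lin Q k)) :
    List Q.A → List Q.A → Prop
  | mk (u w v₁ v₂ : List Q.A) (ρ : Lin Q k) (x y : Q.V)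
      (hmin : MinRel Q k I ρ x y) (h₁ : v₁ ∈ ρ.support) (h₂ : v₂ ∈ ρ.support)
      (hn₁ : v₁ ≠ []) (hn₂ : v₂ ≠ []) :
      NatStep Q k I (u ++ v₁ ++ w) (u ++ v₂ ++ w)

/-- Natural homotopy of paths. -/
def NatHomotopic (Q : Quiv) (k : Type) [Field k] (I : Set (Lin Q k)) :
    List Q.A → List Q.A → Prop :=
  Relation.ReflTransGen (NatStep Q k I)

/-- The homotopy relation `∼` of the bound quiver `(Q, I)`, as the smallest
equivalence relation cancelling `αα⁻¹`, identifying paths of a minimal relation,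
and compatible with concatenation. -/
inductive Homotopic (Q : Quiv) (k : Type) [Field k] (I : Set (Lin Q k)) :
    List (Letter Q) → List (Letter Q) → Prop
  | cancel_fb (a : Q.A) : Homotopic Q k I [.fwd a, .bwd a] []
  | cancel_bf (a : Q.A) : Homotopic Q k I [.bwd a, .fwd a] []
  | minrel (ρ : Lin Q k) (x y : Q.V) (p q : List Q.A) (h : MinRel Q k I ρ x y)
      (hp : p ∈ ρ.support) (hq : q ∈ ρ.support) : Homotopic Q k I (pW Q p) (pW Q q)
  | refl (w : List (Letter Q)) : Homotopic Q k I w w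
  | symm {u v : List (Letter Q)} : Homotopic Q k I u v → Homotopic Q k I v u
  | trans {u v w : List (Letter Q)} :
      Homotopic Q k I u v → Homotopic Q k I v w → Homotopic Q k I u w
  | comp (w₁ w₂ : List (Letter Q)) {u v : List (Letter Q)} :
      Homotopic Q k I u v → Homotopic Q k I (w₁ ++ u ++ w₂) (w₁ ++ v ++ w₂)

/-- Natural contractibility of reduced cycles (Assem–Liu–Zhang). -/
inductive NatContractible (Q : Quiv) (k : Type) [Field k] (I : Set (Lin Q k)) :
    List (Letter Q) → Prop
  | contour (C : List (Letter Q)) (p q : List Q.A) (x y : Q.V) (m : ℕ)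
      (hp : IsDirPath Q p x y) (hq : IsDirPath Q q x y) (hpn : p ≠ []) (hqn : q ≠ [])
      (hrot : C.rotate m = pW Q p ++ wInv Q (pW Q q))
      (hσ : sigmaC Q C = 1)
      (hnat : NatHomotopic Q k I p q) : NatContractible Q k I C
  | split (C w₁ w₂ : List (Letter Q)) (p : List Q.A) (x y : Q.V)
      (h₁ : IsWalk Q w₁ x y) (h₂ : IsWalk Q w₂ x y) (hp : IsDirPath Q p x y)
      (hC : C = w₁ ++ wInv Q w₂) (hσ : 1 < sigmaC Q C)
      (hσ₁ : sigmaC Q (w₁ ++ wInv Q (pW Q p)) < sigmaC Q C)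
      (hσ₂ : sigmaC Q (w₂ ++ wInv Q (pW Q p)) < sigmaC Q C)
      (hc₁ : NatContractible Q k I (w₁ ++ wInv Q (pW Q p)))
      (hc₂ : NatContractible Q k I (w₂ ++ wInv Q (pW Q p))) : NatContractible Q k I C

/-- A Galois covering of bound quivers, given by the action of a group `G`. -/
structure GaloisCov (k : Type) [Field k] (Qt Q : Quiv)
    (It : Set (Lin Qt k)) (I : Set (Lin Q k)) (G : Type) [Group G] where
  onV : Qt.V → Q.V
  onA : Qt.A → Q.A
  comm_s : ∀ a, Q.s (onA a) = onV (Qt.s a)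
  comm_t : ∀ a, Q.t (onA a) = onV (Qt.t a)
  surjV : Function.Surjective onV
  surjA : Function.Surjective onA
  actV : G → Qt.V → Qt.V
  actA : G → Qt.A → Qt.A
  actV_one : ∀ v, actV 1 v = v
  actV_mul : ∀ g h v, actV (g * h) v = actV g (actV h v)
  actA_one : ∀ a, actA 1 a = a
  actA_mul : ∀ g h a, actA (g * h) a = actA g (actA h a)
  act_s : ∀ g a, Qt.s (actA g a) = actV g (Qt.s a)
  act_t : ∀ g a, Qt.t (actA g a) = actV g (Qt.t a)
  onV_act : ∀ g v, onV (actV g v) = onV v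
  onA_act : ∀ g a, onA (actA g a) = onA a
  free : ∀ g v, actV g v = v → g = 1
  fiberV : ∀ v w, onV v = onV w → ∃ g, actV g v = w
  fiberA : ∀ a b, onA a = onA b → ∃ g, actA g a = b
  mapsIdeal : ∀ ρ ∈ It, Finsupp.mapDomain (List.map onA) ρ ∈ I

/-- The two-sided ideal of the path algebra generated by a set of relations. -/
def genIdeal (k : Type) [Field k] (Q : Quiv) (gens : Set (Lin Q k)) : Set (Lin Q k) :=
  (Submodule.span k
    {x : Lin Q k | ∃ ρ ∈ gens, ∃ u w : List Q.A,
      x = Finsupp.mapDomain (fun p => u ++ p ++ w) ρ} : Set (Lin Q k))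

/-- `d(x,y)`: the maximal length of a directed path from `x` to `y`. -/
noncomputable def qDist (Q : Quiv) (x y : Q.V) : ℕ :=
  sSup {n | ∃ w, IsDirPath Q w x y ∧ w.length = n}

/-! Auxiliary lemmas -/

def Letter.arr : Letter Q → Q.A
  | .fwd a => a
  | .bwd a => a

@[simp] lemma Letter.inv_src (c : Letter Q) : c.inv.src = c.tgt := by cases c <;> rfl
@[simp] lemma Letter.inv_tgt (c : Letter Q) : c.inv.tgt = c.src := by cases c <;> rfl
@[simp] lemma Letter.inv_inv (c : Letter Q) : c.inv.inv = c := by cases c <;> rfl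

lemma fwd_of_isFwd {c : Letter Q} (h : c.isFwd = true) : c = .fwd c.arr := by
  cases c with
  | fwd a => rfl
  | bwd a => simp [Letter.isFwd] at h

lemma bwd_of_not_isFwd {c : Letter Q} (h : c.isFwd = false) : c = .bwd c.arr := by
  cases c with
  | fwd a => simp [Letter.isFwd] at h
  | bwd a => rfl

lemma isWalk_iff (w : List (Letter Q)) (x y : Q.V) :
    IsWalk Q w x y ↔ List.Chain' (fun c d => c.tgt = d.src) w ∧
      (∀ c ∈ w.head?, c.src = x) ∧ (∀ c ∈ w.getLast?, c.tgt = y) ∧ (w = [] → x = y) := by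
  unfold IsWalk
  cases w with
  | nil => simp
  | cons c t =>
    obtain ⟨d, hd⟩ : ∃ d, (c :: t).getLast? = some d :=
      ⟨(c :: t).getLast (by simp), List.getLast?_eq_getLast (by simp)⟩
    rw [hd]
    simp

lemma isWalk_wInv {u : List (Letter Q)} {x y : Q.V} (h : IsWalk Q u y x) :
    IsWalk Q (wInv Q u) x y := by
  rw [isWalk_iff] at h ⊢
  obtain ⟨hc, hh, hl, hnil⟩ := h
  refine ⟨?_, ?_, ?_, ?_⟩
  · unfold wInv
    unfold List.Chain'
    rw [List.isChain_reverse, List.isChain_map]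
    apply List.IsChain.imp _ hc
    intro a b hab
    show b.inv.tgt = a.inv.src
    simp [hab]
  · intro c hcmem
    unfold wInv at hcmem
    rw [List.head?_reverse, List.getLast?_map] at hcmem
    cases hu : u.getLast? with
    | none => rw [hu] at hcmem; simp at hcmem
    | some d =>
      rw [hu] at hcmem
      simp at hcmem
      subst hcmem
      simpa using hl d hu
  · intro c hcmem
    unfold wInv at hcmem
    rw [List.getLast?_reverse, List.head?_map] at hcmem
    cases hu : u.head? with
    | none => rw [hu] at hcmem; simp at hcmem
    | some d =>
      rw [hu] at hcmem
      simp at hcmem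
      subst hcmem
      simpa using hh d hu
  · intro h'
    unfold wInv at h'
    simp at h'
    exact (hnil h').symm

lemma wInv_wInv (u : List (Letter Q)) : wInv Q (wInv Q u) = u := by
  unfold wInv
  rw [List.map_reverse, List.reverse_reverse, List.map_map]
  conv_rhs => rw [← List.map_id u]
  apply List.map_congr_left
  intro c _
  simp [Function.comp]

lemma isWalk_append_split {u v : List (Letter Q)} {x y : Q.V}
    (hu : u ≠ []) (hv : v ≠ []) (h : IsWalk Q (u ++ v) x y) :
    ∃ b, IsWalk Q u x b ∧ IsWalk Q v b y := by
  rw [isWalk_iff] at h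
  obtain ⟨hc, hh, hl, -⟩ := h
  unfold List.Chain' at hc
  rw [List.isChain_append] at hc
  obtain ⟨hcu, hcv, hlink⟩ := hc
  refine ⟨(u.getLast hu).tgt, ?_, ?_⟩
  · rw [isWalk_iff]
    refine ⟨hcu, ?_, ?_, fun h => absurd h hu⟩
    · intro c hc
      apply hh
      rwa [List.head?_append_of_ne_nil _ hu]
    · intro c hc
      rw [List.getLast?_eq_getLast hu] at hc
      simp at hc
      rw [hc]
  · rw [isWalk_iff]
    refine ⟨hcv, ?_, ?_, fun h => absurd h hv⟩
    · intro c hc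
      exact (hlink _ (List.getLast?_eq_getLast hu) c hc).symm
    · intro c hc
      apply hl
      rw [List.getLast?_append, hc]
      rfl

/-- cyclic chain condition -/
def CycC (w : List (Letter Q)) : Prop :=
  ∀ i : Fin w.length, (w.get i).tgt = (w.get (nextIdx i)).src

lemma cyc_of_walk {w : List (Letter Q)} {x : Q.V} (hne : w ≠ []) (h : IsWalk Q w x x) :
    CycC w := by
  rw [isWalk_iff] at h
  obtain ⟨hc, hh, hl, -⟩ := h
  have hn : 0 < w.length := List.length_pos_iff.mpr hne
  intro i
  rcases Nat.lt_or_ge i.1 (w.length - 1) with hlt | hge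
  · have hnext : nextIdx i = ⟨i.1 + 1, by omega⟩ := by
      apply Fin.ext
      show (i.1 + 1) % w.length = i.1 + 1
      exact Nat.mod_eq_of_lt (by omega)
    rw [hnext]
    exact List.isChain_iff_getElem.mp hc i.1 (by omega)
  · have hi : i = ⟨w.length - 1, by omega⟩ := by
      apply Fin.ext
      show i.1 = w.length - 1
      have := i.2
      omega
    have hnext : nextIdx i = ⟨0, hn⟩ := by
      apply Fin.ext
      show (i.1 + 1) % w.length = 0
      rw [hi]
      show (w.length - 1 + 1) % w.length = 0
      rw [Nat.sub_add_cancel hn, Nat.mod_self]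
    rw [hnext, hi]
    have h1 : (w.get ⟨w.length - 1, by omega⟩).tgt = x := by
      apply hl
      rw [List.getLast?_eq_getLast hne, Option.mem_some_iff, List.getLast_eq_getElem, List.get_eq_getElem]
    have h2 : (w.get ⟨0, hn⟩).src = x := by
      apply hh
      rw [List.head?_eq_head hne, Option.mem_some_iff, List.get_mk_zero]
    rw [h1, h2]

lemma walk_of_cyc {w : List (Letter Q)} (hn : 0 < w.length) (h : CycC w) :
    IsWalk Q w ((w.get ⟨0, hn⟩).src) ((w.get ⟨0, hn⟩).src) := by
  rw [isWalk_iff]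
  have hne : w ≠ [] := List.length_pos_iff.mp hn
  refine ⟨?_, ?_, ?_, fun h' => absurd h' hne⟩
  · unfold List.Chain'
    rw [List.isChain_iff_getElem]
    intro i hi
    have := h ⟨i, by omega⟩
    have hnext : nextIdx (⟨i, by omega⟩ : Fin w.length) = ⟨i + 1, by omega⟩ := by
      apply Fin.ext
      show (i + 1) % w.length = i + 1
      exact Nat.mod_eq_of_lt (by omega)
    rwa [hnext] at this
  · intro c hc
    rw [List.head?_eq_head hne, Option.mem_def, Option.some.injEq] at hc
    rw [← hc, List.get_mk_zero]
  · intro c hc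
    rw [List.getLast?_eq_getLast hne, Option.mem_def, Option.some.injEq] at hc
    have := h ⟨w.length - 1, by omega⟩
    have hnext : nextIdx (⟨w.length - 1, by omega⟩ : Fin w.length) = ⟨0, hn⟩ := by
      apply Fin.ext
      show (w.length - 1 + 1) % w.length = 0
      rw [Nat.sub_add_cancel hn, Nat.mod_self]
    rw [hnext] at this
    rw [← hc, List.getLast_eq_getElem]
    exact this

lemma get_rotate_next (w : List (Letter Q)) (m : ℕ) (i : Fin (w.rotate m).length)
    (hw : 0 < w.length) :
    (w.rotate m).get (nextIdx i) = w.get (nextIdx ⟨(i.1 + m) % w.length, Nat.mod_lt _ hw⟩) := by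
  obtain ⟨iv, hiv⟩ := i
  rw [List.get_rotate]
  congr 1
  apply Fin.ext
  show ((iv + 1) % (w.rotate m).length + m) % w.length = ((iv + m) % w.length + 1) % w.length
  rw [List.length_rotate, Nat.mod_add_mod, Nat.mod_add_mod]
  congr 1
  omega

lemma srcIdxB_rotate (w : List (Letter Q)) (m : ℕ) (i : Fin (w.rotate m).length)
    (hw : 0 < w.length) :
    srcIdxB Q (w.rotate m) i = srcIdxB Q w ⟨(i.1 + m) % w.length, Nat.mod_lt _ hw⟩ := by
  unfold srcIdxB
  rw [List.get_rotate, get_rotate_next w m i hw]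

lemma cycC_rotate {w : List (Letter Q)} (h : CycC w) (m : ℕ) : CycC (w.rotate m) := by
  intro i
  have hw : 0 < w.length := by
    have := i.pos
    rwa [List.length_rotate] at this
  rw [List.get_rotate, get_rotate_next w m i hw]
  exact h _

lemma length_filter_eq_card {n : ℕ} (f : Fin n → Bool) :
    ((List.finRange n).filter f).length = (Finset.univ.filter (fun i => f i = true)).card := by
  rw [← List.toFinset_card_of_nodup ((List.nodup_finRange n).filter f)]
  congr 1
  ext i
  simp

lemma rotIdx_bijective (w : List (Letter Q)) (m : ℕ) (hw : 0 < w.length) :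
    Function.Bijective (fun i : Fin (w.rotate m).length =>
      (⟨(i.1 + m) % w.length, Nat.mod_lt _ hw⟩ : Fin w.length)) := by
  rw [Fintype.bijective_iff_injective_and_card]
  constructor
  · intro i j hij
    have h1 : (i.1 + m) % w.length = (j.1 + m) % w.length := congrArg Fin.val hij
    have h2 : i.1 % w.length = j.1 % w.length := Nat.ModEq.add_right_cancel' m h1
    have hlen : (w.rotate m).length = w.length := List.length_rotate w m
    have hi2 := i.2
    have hj2 := j.2
    have hi : i.1 < w.length := by omega
    have hj : j.1 < w.length := by omega
    apply Fin.ext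
    rwa [Nat.mod_eq_of_lt hi, Nat.mod_eq_of_lt hj] at h2
  · simp [List.length_rotate]

lemma sigma_rotate (w : List (Letter Q)) (m : ℕ) (hw : 0 < w.length) :
    sigmaC Q (w.rotate m) = sigmaC Q w := by
  unfold sigmaC
  rw [length_filter_eq_card, length_filter_eq_card]
  have hbij := rotIdx_bijective w m hw
  apply Finset.card_bij
    (fun i _ => (⟨(i.1 + m) % w.length, Nat.mod_lt _ hw⟩ : Fin w.length))
  · intro a ha
    simp only [Finset.mem_filter, Finset.mem_univ, true_and] at ha ⊢
    rw [srcIdxB_rotate w m a hw] at ha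
    exact ha
  · intro a _ b _ h
    exact hbij.1 h
  · intro b hb
    simp only [Finset.mem_filter, Finset.mem_univ, true_and] at hb
    obtain ⟨a, ha⟩ := hbij.2 b
    have ha' : (⟨(a.1 + m) % w.length, Nat.mod_lt _ hw⟩ : Fin w.length) = b := ha
    refine ⟨a, ?_, ha⟩
    simp only [Finset.mem_filter, Finset.mem_univ, true_and]
    rw [srcIdxB_rotate w m a hw, ha']
    exact hb

lemma filter_len_one {n : ℕ} (f : Fin n → Bool) :
    ((List.finRange n).filter f).length = 1 ↔
      ∃ a, f a = true ∧ ∀ j, f j = true → j = a := by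
  constructor
  · intro h
    rcases hL : (List.finRange n).filter f with - | ⟨a, l⟩
    · rw [hL] at h; simp at h
    · rcases l with - | ⟨b, l⟩
      · refine ⟨a, ?_, ?_⟩
        · have : a ∈ (List.finRange n).filter f := by rw [hL]; exact List.mem_singleton_self a
          exact (List.mem_filter.mp this).2
        · intro j hj
          have : j ∈ (List.finRange n).filter f :=
            List.mem_filter.mpr ⟨List.mem_finRange j, hj⟩
          rw [hL] at this
          exact List.mem_singleton.mp this
      · rw [hL] at h; simp at h
  · rintro ⟨a, ha, hu⟩
    have heq : (List.finRange n).filter f = (List.finRange n).filter (fun j => j == a) := by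
      apply List.filter_congr
      intro x _
      cases hx : f x with
      | true => simp [hu x hx]
      | false =>
        have hxa : x ≠ a := fun e => by rw [e, ha] at hx; cases hx
        simp [hxa]
    rw [heq, ← List.countP_eq_length_filter]
    exact List.count_eq_one_of_mem (List.nodup_finRange n) (List.mem_finRange a)


lemma pW_of_all_fwd {u : List (Letter Q)} (h : ∀ c ∈ u, c.isFwd = true) :
    pW Q (u.map Letter.arr) = u := by
  unfold pW
  rw [List.map_map]
  conv_rhs => rw [← List.map_id u]
  apply List.map_congr_left
  intro c hc
  exact (fwd_of_isFwd (h c hc)).symm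

lemma wInv_pW_of_all_bwd {u : List (Letter Q)} (h : ∀ c ∈ u, c.isFwd = false) :
    wInv Q (pW Q ((u.map Letter.arr).reverse)) = u := by
  unfold wInv pW
  rw [List.map_map, ← List.map_reverse, List.reverse_reverse, List.map_map]
  conv_rhs => rw [← List.map_id u]
  apply List.map_congr_left
  intro c hc
  have hb := bwd_of_not_isFwd (h c hc)
  show Letter.inv (Letter.fwd c.arr) = c
  conv_rhs => rw [hb]
  rfl

lemma all_bwd_wInv_pW (q : List Q.A) : ∀ c ∈ wInv Q (pW Q q), c.isFwd = false := by
  intro c hc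
  unfold wInv pW at hc
  rw [List.mem_reverse, List.map_map] at hc
  obtain ⟨a, -, rfl⟩ := List.mem_map.mp hc
  rfl

lemma block_structure {v : List (Letter Q)} (hn : 0 < v.length)
    (h0 : (v.get ⟨0, hn⟩).isFwd = true)
    (hlast : (v.get ⟨v.length - 1, by omega⟩).isFwd = false)
    (hmono : ∀ j (h : j + 1 < v.length),
        (v.get ⟨j + 1, h⟩).isFwd = true → (v.get ⟨j, by omega⟩).isFwd = true) :
    ∃ k, 0 < k ∧ k < v.length ∧ ∀ j (h : j < v.length),
      (v.get ⟨j, h⟩).isFwd = decide (j < k) := by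
  classical
  have hP : ∃ j, ∃ h : j < v.length, (v.get ⟨j, h⟩).isFwd = false := ⟨v.length - 1, by omega, hlast⟩
  set k := Nat.find hP with hkdef
  obtain ⟨hk_lt, hk_false⟩ := Nat.find_spec hP
  have hk_pos : 0 < k := by
    rcases Nat.eq_zero_or_pos k with hz | h
    · exfalso
      have he : (⟨k, hk_lt⟩ : Fin v.length) = ⟨0, hn⟩ := Fin.ext hz
      rw [he, h0] at hk_false
      cases hk_false
    · exact h
  have lower : ∀ j (h : j < v.length), j < k → (v.get ⟨j, h⟩).isFwd = true := by
    intro j h hj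
    have := Nat.find_min hP hj
    push_neg at this
    have := this h
    revert this
    cases (v.get ⟨j, h⟩).isFwd <;> simp
  have upper : ∀ j, k ≤ j → ∀ h : j < v.length, (v.get ⟨j, h⟩).isFwd = false := by
    intro j
    induction j with
    | zero => intro hk0 _; omega
    | succ j ih =>
      intro hkj h
      rcases Nat.lt_or_ge j k with hlt | hge
      · have hkk : k = j + 1 := by omega
        have he : (⟨j + 1, h⟩ : Fin v.length) = ⟨k, hk_lt⟩ := Fin.ext hkk.symm
        rw [he]
        exact hk_false
      · have hj := ih hge (by omega)
        cases hfs : (v.get ⟨j + 1, h⟩).isFwd with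
        | false => rfl
        | true =>
          have := hmono j h hfs
          rw [hj] at this
          cases this
  refine ⟨k, hk_pos, by omega, ?_⟩
  intro j h
  rcases Nat.lt_or_ge j k with hlt | hge
  · rw [lower j h hlt]
    simp [hlt]
  · rw [upper j hge h]
    symm
    simp
    omega

lemma nextIdx_last {n : ℕ} (hn : 0 < n) :
    nextIdx (⟨n - 1, by omega⟩ : Fin n) = ⟨0, hn⟩ := by
  apply Fin.ext
  show (n - 1 + 1) % n = 0
  rw [Nat.sub_add_cancel hn, Nat.mod_self]

lemma nextIdx_lt {n j : ℕ} (h : j + 1 < n) :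
    nextIdx (⟨j, by omega⟩ : Fin n) = ⟨j + 1, h⟩ := by
  apply Fin.ext
  show (j + 1) % n = j + 1
  exact Nat.mod_eq_of_lt h

/-- In a word that is a block of fwd letters followed by a block of bwd letters,
the unique source index is the last one. -/
lemma srcIdx_block {L : List (Letter Q)} {k : ℕ} (hk : 0 < k) (hkl : k < L.length)
    (hpat : ∀ j (h : j < L.length), (L.get ⟨j, h⟩).isFwd = decide (j < k)) :
    ∀ i : Fin L.length, (srcIdxB Q L i = true ↔ i.1 = L.length - 1) := by
  intro i
  have hn : 0 < L.length := by omega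
  constructor
  · intro hs
    by_contra hne
    have hi1 : i.1 + 1 < L.length := by have := i.2; omega
    have hieq : i = ⟨i.1, i.2⟩ := rfl
    unfold srcIdxB at hs
    rw [Bool.and_eq_true, Bool.not_eq_true'] at hs
    obtain ⟨hs1, hs2⟩ := hs
    have hni : nextIdx i = ⟨i.1 + 1, hi1⟩ := by
      apply Fin.ext
      show (i.1 + 1) % L.length = i.1 + 1
      exact Nat.mod_eq_of_lt hi1
    rw [hni] at hs2
    rw [hpat _ hi1] at hs2
    have h1 : i.1 + 1 < k := by simpa using hs2
    have := hpat i.1 i.2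
    rw [hieq] at hs1
    rw [hs1] at this
    simp at this
    omega
  · intro hi
    have hie : i = ⟨L.length - 1, by omega⟩ := Fin.ext hi
    unfold srcIdxB
    rw [hie, nextIdx_last hn]
    rw [Bool.and_eq_true, Bool.not_eq_true']
    constructor
    · rw [hpat _ (by omega : L.length - 1 < L.length)]
      simp
      omega
    · rw [hpat _ hn]
      simp [hk]


lemma sigma_eq_one_iff (v : List (Letter Q)) :
    sigmaC Q v = 1 ↔ ∃ a, srcIdxB Q v a = true ∧ ∀ j, srcIdxB Q v j = true → j = a := by
  unfold sigmaC
  exact filter_len_one _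


theorem stmt1_aux (Q : Quiv) (w : List (Letter Q)) (x : Q.V)
    (hcyc : IsCycleAt Q w x) :
    sigmaC Q w = 1 ↔ ∃ (m : ℕ) (p q : List Q.A) (a b : Q.V),
      p ≠ [] ∧ q ≠ [] ∧ IsDirPath Q p a b ∧ IsDirPath Q q a b ∧
      w.rotate m = pW Q p ++ wInv Q (pW Q q) := by
  obtain ⟨hne, hwalk⟩ := hcyc
  have hn : 0 < w.length := List.length_pos_iff.mpr hne
  have hcw : CycC w := cyc_of_walk hne hwalk
  constructor
  · intro hσ
    obtain ⟨a, ha, hu⟩ := (sigma_eq_one_iff w).mp hσ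
    have ha2 := a.2
    set m := a.1 + 1 with hm
    have hrlen : (w.rotate m).length = w.length := List.length_rotate w m
    have hrpos : 0 < (w.rotate m).length := by omega
    obtain ⟨c, hc, hcu⟩ :=
      (sigma_eq_one_iff (w.rotate m)).mp ((sigma_rotate w m hn).trans hσ)
    have hlast_src :
        srcIdxB Q (w.rotate m) ⟨(w.rotate m).length - 1, by omega⟩ = true := by
      rw [srcIdxB_rotate w m _ hn]
      have hidx : (⟨((⟨(w.rotate m).length - 1, by omega⟩ :
            Fin (w.rotate m).length).1 + m) % w.length,
            Nat.mod_lt _ hn⟩ : Fin w.length) = a := by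
        apply Fin.ext
        show ((w.rotate m).length - 1 + m) % w.length = a.1
        rw [hrlen]
        have h9 : w.length - 1 + m = w.length + a.1 := by omega
        rw [h9, Nat.add_mod_left]
        exact Nat.mod_eq_of_lt a.2
      rw [hidx]
      exact ha
    have huniq : ∀ j : Fin (w.rotate m).length,
        srcIdxB Q (w.rotate m) j = true → j.1 = (w.rotate m).length - 1 := by
      intro j hj
      exact congrArg Fin.val ((hcu j hj).trans (hcu _ hlast_src).symm)
    have hfirst : ((w.rotate m).get ⟨0, hrpos⟩).isFwd = true ∧
        ((w.rotate m).get ⟨(w.rotate m).length - 1, by omega⟩).isFwd = false := by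
      have hh := hlast_src
      unfold srcIdxB at hh
      rw [Bool.and_eq_true, Bool.not_eq_true'] at hh
      obtain ⟨h1, h2⟩ := hh
      rw [nextIdx_last hrpos] at h2
      exact ⟨h2, h1⟩
    have hmono : ∀ j (h : j + 1 < (w.rotate m).length),
        ((w.rotate m).get ⟨j + 1, h⟩).isFwd = true →
        ((w.rotate m).get ⟨j, by omega⟩).isFwd = true := by
      intro j h hj1
      by_contra hj0
      have hj0' : ((w.rotate m).get ⟨j, by omega⟩).isFwd = false := by
        revert hj0
        cases ((w.rotate m).get ⟨j, by omega⟩).isFwd <;> simp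
      have hsrc : srcIdxB Q (w.rotate m) ⟨j, by omega⟩ = true := by
        unfold srcIdxB
        rw [nextIdx_lt h, Bool.and_eq_true, Bool.not_eq_true']
        exact ⟨hj0', hj1⟩
      have := huniq _ hsrc
      simp at this
      omega
    obtain ⟨k, hk0, hkl, hpat⟩ := block_structure hrpos hfirst.1 hfirst.2 hmono
    have hwr := walk_of_cyc hrpos (cycC_rotate hcw m)
    have hsplit0 : (w.rotate m).take k ++ (w.rotate m).drop k = w.rotate m :=
      List.take_append_drop k _
    have htne : (w.rotate m).take k ≠ [] :=
      List.length_pos_iff.mp (by rw [List.length_take]; omega)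
    have hdne : (w.rotate m).drop k ≠ [] :=
      List.length_pos_iff.mp (by rw [List.length_drop]; omega)
    obtain ⟨b, hwu, hwv⟩ := isWalk_append_split htne hdne (by rw [hsplit0]; exact hwr)
    have hallf : ∀ c ∈ (w.rotate m).take k, c.isFwd = true := by
      intro c hc
      obtain ⟨i, hi, rfl⟩ := List.mem_iff_getElem.mp hc
      have hik : i < k := by rw [List.length_take] at hi; omega
      have hilt : i < (w.rotate m).length := by omega
      rw [List.getElem_take]
      have hp := hpat i hilt
      rw [List.get_eq_getElem] at hp
      rw [hp]
      simp [hik]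
    have hallb : ∀ c ∈ (w.rotate m).drop k, c.isFwd = false := by
      intro c hc
      obtain ⟨i, hi, rfl⟩ := List.mem_iff_getElem.mp hc
      have hilt : k + i < (w.rotate m).length := by rw [List.length_drop] at hi; omega
      rw [List.getElem_drop]
      have hp := hpat (k + i) hilt
      rw [List.get_eq_getElem] at hp
      rw [hp]
      simp
    refine ⟨m, ((w.rotate m).take k).map Letter.arr,
      (((w.rotate m).drop k).map Letter.arr).reverse,
      (((w.rotate m).get ⟨0, hrpos⟩).src), b, ?_, ?_, ?_, ?_, ?_⟩
    · simpa using htne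
    · simpa using hdne
    · unfold IsDirPath
      rw [pW_of_all_fwd hallf]
      exact hwu
    · unfold IsDirPath
      have hveq := wInv_pW_of_all_bwd hallb
      have hww := isWalk_wInv hwv
      rw [← hveq, wInv_wInv] at hww
      exact hww
    · rw [pW_of_all_fwd hallf, wInv_pW_of_all_bwd hallb]
      exact hsplit0.symm
  · rintro ⟨m, p, q, a, b, hp0, hq0, hp, hq, hrot⟩
    rw [← sigma_rotate w m hn, hrot]
    have hppos : 0 < p.length := List.length_pos_iff.mpr hp0
    have hqpos : 0 < q.length := List.length_pos_iff.mpr hq0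
    have hLlen : (pW Q p ++ wInv Q (pW Q q)).length = p.length + q.length := by
      simp [pW, wInv]
    have hkl : p.length < (pW Q p ++ wInv Q (pW Q q)).length := by omega
    have hpat : ∀ j (h : j < (pW Q p ++ wInv Q (pW Q q)).length),
        ((pW Q p ++ wInv Q (pW Q q)).get ⟨j, h⟩).isFwd = decide (j < p.length) := by
      intro j h
      rw [List.get_eq_getElem]
      rcases Nat.lt_or_ge j p.length with hj | hj
      · have hj' : j < (pW Q p).length := by simpa [pW] using hj
        rw [List.getElem_append, dif_pos hj']
        simp only [pW, List.getElem_map]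
        simp [Letter.isFwd, hj]
      · have hj' : ¬ j < (pW Q p).length := by simp [pW]; omega
        rw [List.getElem_append, dif_neg hj']
        rw [all_bwd_wInv_pW q _ (List.getElem_mem _)]
        simp
        omega
    rw [sigma_eq_one_iff]
    refine ⟨⟨(pW Q p ++ wInv Q (pW Q q)).length - 1, by omega⟩, ?_, ?_⟩
    · exact (srcIdx_block hppos hkl hpat _).mpr rfl
    · intro j hj
      exact Fin.ext ((srcIdx_block hppos hkl hpat j).mp hj)


/-- a reduced cycle has exactly one source iff some cyclic rotation of it
has the form `p q⁻¹` with `p`, `q` nontrivial directed paths from `a` to `b`. -/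
theorem stmt1 (Q : Quiv) (w : List (Letter Q)) (x : Q.V)
    (hcyc : IsCycleAt Q w x) (hred : IsReducedCyc Q w) :
    sigmaC Q w = 1 ↔ ∃ (m : ℕ) (p q : List Q.A) (a b : Q.V),
      p ≠ [] ∧ q ≠ [] ∧ IsDirPath Q p a b ∧ IsDirPath Q q a b ∧
      w.rotate m = pW Q p ++ wInv Q (pW Q q) := by
  exact stmt1_aux Q w x hcyc

end BQ
end

section
/- Let F: (Q̃,Ĩ) → (Q,I) be a Galois covering of bound quivers with Q triangular (no oriented cycles). Suppose γ is a simple cycle in Q̃ consisting of four directed paths x₁ ⤳ y₁, x₁ ⤳ y₂, x₂ ⤳ y₂, x₂ ⤳ y₁ (so σ(γ) = 2), where F(x₁) = F(x₂) = x and F(y₁) = F(y₂) = y. Then γ is irreducible: there do not exist vertices a, b of γ, a directed path p from a to b, and reduced walks w₁, w₂ from a to b with γ = w₁w₂⁻¹, σ(w₁p⁻¹) < 2 and σ(pw₂⁻¹) < 2. -/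
namespace BQ

variable {Q : Quiv}

section Aux

variable {Q : Quiv}

lemma gelem_congr {α} (l : List α) {i j : ℕ} (h : i = j) (hj : j < l.length) :
    l[i]'(h ▸ hj) = l[j] := by subst h; rfl

lemma gelem_congr' {α} (l : List α) (i j : ℕ) (h : i = j) (hj : j < l.length) :
    l[i]'(h ▸ hj) = l[j] := by subst h; rfl

lemma gelem_eq {α} {l l' : List α} (h : l = l') {i : ℕ} (hi : i < l'.length) :
    l[i]'(h ▸ hi) = l'[i] := by subst h; rfl

lemma gelem_eq' {α} {l l' : List α} (h : l = l') (i : ℕ) (hi : i < l'.length) :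
    l[i]'(h ▸ hi) = l'[i] := by subst h; rfl

lemma walk_nil {x y : Q.V} (h : IsWalk Q [] x y) : x = y := h.2.1

lemma walk_src {w : List (Letter Q)} {x y : Q.V} (h : IsWalk Q w x y) (hn : w ≠ []) :
    (w.head hn).src = x := by
  cases w with
  | nil => exact absurd rfl hn
  | cons c t => exact h.2.1

lemma walk_tgt {w : List (Letter Q)} {x y : Q.V} (h : IsWalk Q w x y) (hn : w ≠ []) :
    (w.getLast hn).tgt = y := by
  have h2 := h.2.2
  rw [List.getLast?_eq_getLast hn] at h2
  exact h2

lemma walk_mk {w : List (Letter Q)} {x y : Q.V}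
    (hc : List.Chain' (fun c d : Letter Q => c.tgt = d.src) w) (hn : w ≠ [])
    (hh : (w.head hn).src = x) (hl : (w.getLast hn).tgt = y) : IsWalk Q w x y := by
  refine ⟨hc, ?_, ?_⟩
  · cases w with
    | nil => exact absurd rfl hn
    | cons c t => exact hh
  · rw [List.getLast?_eq_getLast hn]
    exact hl

lemma dir_src {p : List Q.A} {x y : Q.V} (h : IsDirPath Q p x y) (hn : p ≠ []) :
    Q.s (p.head hn) = x := by
  have hn' : pW Q p ≠ [] := by simp [pW, hn]
  have := walk_src h hn'
  simp only [pW] at this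
  rw [List.head_map] at this
  exact this

lemma dir_tgt {p : List Q.A} {x y : Q.V} (h : IsDirPath Q p x y) (hn : p ≠ []) :
    Q.t (p.getLast hn) = y := by
  have hn' : pW Q p ≠ [] := by simp [pW, hn]
  have := walk_tgt h hn'
  simp only [pW] at this
  rw [List.getLast_map] at this
  exact this

lemma wInv_pW (q : List Q.A) : wInv Q (pW Q q) = (q.map Letter.bwd).reverse := by
  simp only [wInv, pW, List.map_map]
  rfl

lemma src_internal {w : List (Letter Q)} {k : ℕ} (h : k + 1 < w.length)
    (h1 : (w[k]'(Nat.lt_of_succ_lt h)).isFwd = false) (h2 : (w[k+1]'h).isFwd = true) :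
    srcIdxB Q w ⟨k, Nat.lt_of_succ_lt h⟩ = true := by
  unfold srcIdxB nextIdx
  simp only [List.get_eq_getElem]
  rw [gelem_congr w (Nat.mod_eq_of_lt h) h]
  simp [h1, h2]

lemma src_wrap {w : List (Letter Q)} (hn : w ≠ [])
    (h1 : (w[w.length - 1]'(Nat.sub_lt (List.length_pos_iff.mpr hn) one_pos)).isFwd = false)
    (h2 : (w[0]'(List.length_pos_iff.mpr hn)).isFwd = true) :
    srcIdxB Q w ⟨w.length - 1, Nat.sub_lt (List.length_pos_iff.mpr hn) one_pos⟩ = true := by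
  have hpos : 0 < w.length := List.length_pos_iff.mpr hn
  unfold srcIdxB nextIdx
  simp only [List.get_eq_getElem]
  have e1 : (w.length - 1 + 1) % w.length = 0 := by
    have e : w.length - 1 + 1 = w.length := by omega
    rw [e, Nat.mod_self]
  rw [gelem_congr w e1 hpos]
  simp [h1, h2]

lemma two_srcs {w : List (Letter Q)} {i j : Fin w.length} (hij : i ≠ j)
    (hi : srcIdxB Q w i = true) (hj : srcIdxB Q w j = true) : 2 ≤ sigmaC Q w := by
  have hsub : [i, j] ⊆ (List.finRange w.length).filter (fun i => srcIdxB Q w i) := by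
    intro t ht
    simp only [List.mem_cons, List.not_mem_nil, or_false] at ht
    rcases ht with rfl | rfl <;>
      simp [List.mem_filter, List.mem_finRange, hi, hj]
  have hnd : ([i, j] : List (Fin w.length)).Nodup := by simp [hij]
  have := (List.subperm_of_subset hnd hsub).length_le
  simpa [sigmaC] using this

/-- If the left part has a backward letter followed (inside the left part) by a
forward letter, while the right part is nonempty all-backward and the whole
starts forward, then the cycle has at least two sources. -/
lemma noFT_left {w P : List (Letter Q)} (hw : w ≠ []) (hP : P ≠ [])
    (hPb : ∀ l ∈ P, l.isFwd = false)
    (hhead : ∀ (h : 0 < w.length), (w[0]'h).isFwd = true)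
    (hσ : sigmaC Q (w ++ P) < 2) :
    ∀ (k : ℕ) (h : k + 1 < w.length),
      (w[k]'(Nat.lt_of_succ_lt h)).isFwd = false → (w[k+1]'h).isFwd = true → False := by
  intro k h hk hk1
  have hwpos : 0 < w.length := List.length_pos_iff.mpr hw
  have hPpos : 0 < P.length := List.length_pos_iff.mpr hP
  have hClen : (w ++ P).length = w.length + P.length := List.length_append
  have hCne : w ++ P ≠ [] := by simp [hw]
  have hkC : k + 1 < (w ++ P).length := by omega
  have e1 : (w ++ P)[k]'(Nat.lt_of_succ_lt hkC) = w[k]'(Nat.lt_of_succ_lt h) :=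
    List.getElem_append_left (Nat.lt_of_succ_lt h)
  have e2 : (w ++ P)[k+1]'hkC = w[k+1]'h := List.getElem_append_left h
  have s1 : srcIdxB Q (w ++ P) ⟨k, Nat.lt_of_succ_lt hkC⟩ = true :=
    src_internal hkC (by rw [e1]; exact hk) (by rw [e2]; exact hk1)
  have hlast : ((w ++ P)[(w ++ P).length - 1]'
      (Nat.sub_lt (List.length_pos_iff.mpr hCne) one_pos)).isFwd = false := by
    have hge : w.length ≤ (w ++ P).length - 1 := by omega
    rw [List.getElem_append_right hge]
    exact hPb _ (List.getElem_mem _)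
  have hhd : ((w ++ P)[0]'(List.length_pos_iff.mpr hCne)).isFwd = true := by
    rw [List.getElem_append_left hwpos]
    exact hhead hwpos
  have s2 : srcIdxB Q (w ++ P) ⟨(w ++ P).length - 1,
      Nat.sub_lt (List.length_pos_iff.mpr hCne) one_pos⟩ = true :=
    src_wrap hCne hlast hhd
  have hne : (⟨k, Nat.lt_of_succ_lt hkC⟩ : Fin (w ++ P).length) ≠
      ⟨(w ++ P).length - 1, Nat.sub_lt (List.length_pos_iff.mpr hCne) one_pos⟩ := by
    simp only [ne_eq, Fin.mk.injEq]
    omega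
  have := two_srcs hne s1 s2
  omega

/-- Mirror image of `noFT_left`. -/
lemma noFT_right {P v : List (Letter Q)} (hP : P ≠ []) (hv : v ≠ [])
    (hPf : ∀ l ∈ P, l.isFwd = true)
    (hlast : ∀ (h : 0 < v.length), (v[v.length - 1]'(Nat.sub_lt h one_pos)).isFwd = false)
    (hσ : sigmaC Q (P ++ v) < 2) :
    ∀ (k : ℕ) (h : k + 1 < v.length),
      (v[k]'(Nat.lt_of_succ_lt h)).isFwd = false → (v[k+1]'h).isFwd = true → False := by
  intro k h hk hk1
  have hvpos : 0 < v.length := List.length_pos_iff.mpr hv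
  have hPpos : 0 < P.length := List.length_pos_iff.mpr hP
  have hClen : (P ++ v).length = P.length + v.length := List.length_append
  have hCne : P ++ v ≠ [] := by simp [hP]
  have hkC : P.length + k + 1 < (P ++ v).length := by omega
  have e1 : (P ++ v)[P.length + k]'(Nat.lt_of_succ_lt hkC) = v[k]'(Nat.lt_of_succ_lt h) := by
    rw [List.getElem_append_right (by omega : P.length ≤ P.length + k)]
    exact gelem_congr v (by omega) (Nat.lt_of_succ_lt h)
  have e2 : (P ++ v)[P.length + k + 1]'hkC = v[k+1]'h := by
    rw [List.getElem_append_right (by omega : P.length ≤ P.length + k + 1)]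
    exact gelem_congr v (by omega) h
  have s1 : srcIdxB Q (P ++ v) ⟨P.length + k, Nat.lt_of_succ_lt hkC⟩ = true :=
    src_internal hkC (by rw [e1]; exact hk) (by rw [e2]; exact hk1)
  have hlastC : ((P ++ v)[(P ++ v).length - 1]'
      (Nat.sub_lt (List.length_pos_iff.mpr hCne) one_pos)).isFwd = false := by
    rw [List.getElem_append_right (by omega : P.length ≤ (P ++ v).length - 1)]
    have := hlast hvpos
    rw [gelem_congr v (by omega : (P ++ v).length - 1 - P.length = v.length - 1)
      (Nat.sub_lt hvpos one_pos)]
    exact this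
  have hhdC : ((P ++ v)[0]'(List.length_pos_iff.mpr hCne)).isFwd = true := by
    rw [List.getElem_append_left hPpos]
    exact hPf _ (List.getElem_mem _)
  have s2 : srcIdxB Q (P ++ v) ⟨(P ++ v).length - 1,
      Nat.sub_lt (List.length_pos_iff.mpr hCne) one_pos⟩ = true :=
    src_wrap hCne hlastC hhdC
  have hne : (⟨P.length + k, Nat.lt_of_succ_lt hkC⟩ : Fin (P ++ v).length) ≠
      ⟨(P ++ v).length - 1, Nat.sub_lt (List.length_pos_iff.mpr hCne) one_pos⟩ := by
    simp only [ne_eq, Fin.mk.injEq]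
    omega
  have := two_srcs hne s1 s2
  omega

end Aux

lemma dirPath_map {k : Type} [Field k] {Qt Q : Quiv} {It : Set (Lin Qt k)}
    {I : Set (Lin Q k)} {G : Type} [Group G] (F : GaloisCov k Qt Q It I G)
    {p : List Qt.A} {a b : Qt.V} (h : IsDirPath Qt p a b) :
    IsDirPath Q (p.map F.onA) (F.onV a) (F.onV b) := by
  rcases eq_or_ne p [] with rfl | hn
  · have hab : a = b := walk_nil h
    exact ⟨List.isChain_nil, congrArg F.onV hab, congrArg F.onV hab⟩
  · have hc' : List.Chain' (fun c d : Qt.A => Qt.t c = Qt.s d) p :=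
      (List.isChain_map Letter.fwd).mp h.1
    have hn' : pW Q (p.map F.onA) ≠ [] := by simp [pW, hn]
    have hn'' : p.map F.onA ≠ [] := by simp [hn]
    refine walk_mk ?_ hn' ?_ ?_
    · show List.Chain' _ ((p.map F.onA).map Letter.fwd)
      unfold List.Chain'; rw [List.isChain_map, List.isChain_map]
      exact hc'.imp (fun c d hcd => by
        show Q.t (F.onA c) = Q.s (F.onA d)
        rw [F.comm_t, F.comm_s, hcd])
    · show ((pW Q (p.map F.onA)).head hn').src = F.onV a
      simp only [pW]
      rw [List.head_map, List.head_map]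
      show Q.s (F.onA (p.head hn)) = F.onV a
      rw [F.comm_s, dir_src h hn]
    · show ((pW Q (p.map F.onA)).getLast hn').tgt = F.onV b
      simp only [pW]
      rw [List.getLast_map, List.getLast_map]
      show Q.t (F.onA (p.getLast hn)) = F.onV b
      rw [F.comm_t, dir_tgt h hn]

/-- Proposition 2.2: a simple cycle in the covering formed by four
directed paths `x₁ ⤳ y₁`, `x₁ ⤳ y₂`, `x₂ ⤳ y₂`, `x₂ ⤳ y₁` lying over the same
pair `(x, y)` is irreducible. -/
theorem stmt9 (k : Type) [Field k] (Qt Q : Quiv)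
    (It : Set (Lin Qt k)) (I : Set (Lin Q k)) (G : Type) [Group G]
    (F : GaloisCov k Qt Q It I G) (hQ : Triangular Q)
    (x y : Q.V) (x₁ x₂ y₁ y₂ : Qt.V)
    (p₁₁ p₁₂ p₂₂ p₂₁ : List Qt.A)
    (h₁₁ : IsDirPath Qt p₁₁ x₁ y₁) (h₁₂ : IsDirPath Qt p₁₂ x₁ y₂)
    (h₂₂ : IsDirPath Qt p₂₂ x₂ y₂) (h₂₁ : IsDirPath Qt p₂₁ x₂ y₁)
    (hn₁₁ : p₁₁ ≠ []) (hn₁₂ : p₁₂ ≠ []) (hn₂₂ : p₂₂ ≠ []) (hn₂₁ : p₂₁ ≠ [])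
    (hFx : F.onV x₁ = x ∧ F.onV x₂ = x) (hFy : F.onV y₁ = y ∧ F.onV y₂ = y)
    (γ : List (Letter Qt))
    (hγdef : γ = pW Qt p₁₁ ++ wInv Qt (pW Qt p₂₁) ++ pW Qt p₂₂ ++ wInv Qt (pW Qt p₁₂))
    (hγred : IsReducedCyc Qt γ) (hγsimple : IsSimple Qt γ)
    (hσ : sigmaC Qt γ = 2) :
    ¬ ∃ (a b : Qt.V) (p : List Qt.A) (w₁ w₂ : List (Letter Qt)),
      IsDirPath Qt p a b ∧
      IsWalk Qt w₁ a b ∧ IsWalk Qt w₂ a b ∧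
      IsReducedWalk Qt w₁ ∧ IsReducedWalk Qt w₂ ∧
      γ = w₁ ++ wInv Qt w₂ ∧
      sigmaC Qt (w₁ ++ wInv Qt (pW Qt p)) < 2 ∧
      sigmaC Qt (pW Qt p ++ wInv Qt w₂) < 2 := by
  have tri : ∀ (q : List Qt.A) (v : Qt.V), IsDirPath Qt q v v → q = [] := by
    intro q v hq
    have h0 := hQ (q.map F.onA) (F.onV v) (dirPath_map F hq)
    simpa using h0
  rintro ⟨a, b, p, w₁, w₂, hp, hw1, hw2, hr1, hr2, hsplit, hs1, hs2⟩
  -- abbreviations for lengths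
  have h1p : 0 < p₁₁.length := List.length_pos_iff.mpr hn₁₁
  have h2p : 0 < p₂₁.length := List.length_pos_iff.mpr hn₂₁
  have h3p : 0 < p₂₂.length := List.length_pos_iff.mpr hn₂₂
  have h4p : 0 < p₁₂.length := List.length_pos_iff.mpr hn₁₂
  -- concrete description of γ
  have hγ : γ = ((p₁₁.map Letter.fwd ++ (p₂₁.map Letter.bwd).reverse) ++
      p₂₂.map Letter.fwd) ++ (p₁₂.map Letter.bwd).reverse := by
    rw [hγdef, wInv_pW, wInv_pW]
    rfl
  have hγlen : γ.length = p₁₁.length + p₂₁.length + p₂₂.length + p₁₂.length := by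
    rw [hγ]
    simp only [List.length_append, List.length_map, List.length_reverse]
  -- source/target data of the extreme arrows
  have hs11 : Qt.s (p₁₁[0]'h1p) = x₁ := by
    rw [List.getElem_zero h1p]; exact dir_src h₁₁ hn₁₁
  have hs21 : Qt.s (p₂₁[0]'h2p) = x₂ := by
    rw [List.getElem_zero h2p]; exact dir_src h₂₁ hn₂₁
  have hs12 : Qt.s (p₁₂[0]'h4p) = x₁ := by
    rw [List.getElem_zero h4p]; exact dir_src h₁₂ hn₁₂
  -- values of γ at key positions
  have hγ0lt : 0 < γ.length := by omega
  have hg0 : γ[0]'hγ0lt = Letter.fwd (p₁₁[0]'h1p) := by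
    rw [gelem_eq hγ (i := 0) (by simp only [List.length_append, List.length_map, List.length_reverse]; omega)]
    rw [List.getElem_append_left (by simp only [List.length_append, List.length_map, List.length_reverse]; omega :
      (0:ℕ) < ((p₁₁.map Letter.fwd ++ (p₂₁.map Letter.bwd).reverse) ++
        p₂₂.map Letter.fwd).length)]
    rw [List.getElem_append_left (by simp only [List.length_append, List.length_map, List.length_reverse]; omega :
      (0:ℕ) < (p₁₁.map Letter.fwd ++ (p₂₁.map Letter.bwd).reverse).length)]
    rw [List.getElem_append_left (by simp only [List.length_append, List.length_map, List.length_reverse]; omega : (0:ℕ) < (p₁₁.map Letter.fwd).length)]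
    rw [List.getElem_map]
  have hLlt : p₁₁.length + p₂₁.length - 1 < γ.length := by omega
  have hgL : γ[p₁₁.length + p₂₁.length - 1]'hLlt = Letter.bwd (p₂₁[0]'h2p) := by
    rw [gelem_eq hγ (i := p₁₁.length + p₂₁.length - 1) (by simp only [List.length_append, List.length_map, List.length_reverse]; omega)]
    rw [List.getElem_append_left (by simp only [List.length_append, List.length_map, List.length_reverse]; omega :
      p₁₁.length + p₂₁.length - 1 < ((p₁₁.map Letter.fwd ++ (p₂₁.map Letter.bwd).reverse) ++
        p₂₂.map Letter.fwd).length)]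
    rw [List.getElem_append_left (by simp only [List.length_append, List.length_map, List.length_reverse]; omega :
      p₁₁.length + p₂₁.length - 1 < (p₁₁.map Letter.fwd ++ (p₂₁.map Letter.bwd).reverse).length)]
    rw [List.getElem_append_right (by simp only [List.length_append, List.length_map, List.length_reverse]; omega :
      (p₁₁.map Letter.fwd).length ≤ p₁₁.length + p₂₁.length - 1)]
    rw [List.getElem_reverse]
    rw [gelem_congr _ (by simp only [List.length_append, List.length_map, List.length_reverse]; omega :
      (p₂₁.map Letter.bwd).length - 1 -
        (p₁₁.length + p₂₁.length - 1 - (p₁₁.map Letter.fwd).length) = 0) (by simp only [List.length_append, List.length_map, List.length_reverse]; omega)]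
    rw [List.getElem_map]
  have hL1lt : p₁₁.length + p₂₁.length < γ.length := by omega
  have hgL1 : γ[p₁₁.length + p₂₁.length]'hL1lt = Letter.fwd (p₂₂[0]'h3p) := by
    rw [gelem_eq hγ (i := p₁₁.length + p₂₁.length) (by simp only [List.length_append, List.length_map, List.length_reverse]; omega)]
    rw [List.getElem_append_left (by simp only [List.length_append, List.length_map, List.length_reverse]; omega :
      p₁₁.length + p₂₁.length < ((p₁₁.map Letter.fwd ++ (p₂₁.map Letter.bwd).reverse) ++
        p₂₂.map Letter.fwd).length)]
    rw [List.getElem_append_right (by simp only [List.length_append, List.length_map, List.length_reverse]; omega :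
      (p₁₁.map Letter.fwd ++ (p₂₁.map Letter.bwd).reverse).length ≤
        p₁₁.length + p₂₁.length)]
    rw [gelem_congr _ (by simp only [List.length_append, List.length_map, List.length_reverse]; omega :
      p₁₁.length + p₂₁.length -
        (p₁₁.map Letter.fwd ++ (p₂₁.map Letter.bwd).reverse).length = 0) (by simp only [List.length_append, List.length_map, List.length_reverse]; omega)]
    rw [List.getElem_map]
  have hglastlt : γ.length - 1 < γ.length := by omega
  have hglast : γ[γ.length - 1]'hglastlt = Letter.bwd (p₁₂[0]'h4p) := by
    rw [gelem_eq hγ (i := γ.length - 1) (by simp only [List.length_append, List.length_map, List.length_reverse]; omega)]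
    rw [List.getElem_append_right (by simp only [List.length_append, List.length_map, List.length_reverse]; omega :
      (((p₁₁.map Letter.fwd ++ (p₂₁.map Letter.bwd).reverse) ++
        p₂₂.map Letter.fwd)).length ≤ γ.length - 1)]
    rw [List.getElem_reverse]
    rw [gelem_congr (p₁₂.map Letter.bwd)
      (show (p₁₂.map Letter.bwd).length - 1 - (γ.length - 1 -
          ((p₁₁.map Letter.fwd ++ (p₂₁.map Letter.bwd).reverse) ++
            p₂₂.map Letter.fwd).length) = 0 by
        simp only [List.length_append, List.length_map, List.length_reverse, hγlen]; omega)
      (by simp only [List.length_map]; omega)]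
    rw [List.getElem_map]
  -- trivial cases
  rcases eq_or_ne w₁ [] with rfl | hW1
  · have hab : a = b := walk_nil hw1
    obtain rfl : p = [] := tri p a (by rw [hab] at hp ⊢; exact hp)
    simp only [List.nil_append] at hsplit
    rw [← hsplit] at hs2
    simp only [pW, List.map_nil, List.nil_append] at hs2
    omega
  rcases eq_or_ne w₂ [] with rfl | hW2
  · have hab : a = b := walk_nil hw2
    obtain rfl : p = [] := tri p a (by rw [hab] at hp ⊢; exact hp)
    have hw2nil : wInv Qt ([] : List (Letter Qt)) = [] := rfl
    rw [hw2nil, List.append_nil] at hsplit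
    have : wInv Qt (pW Qt ([] : List Qt.A)) = [] := rfl
    rw [this, List.append_nil, ← hsplit] at hs1
    omega
  -- length facts from the splitting
  have hVlen : (wInv Qt w₂).length = w₂.length := by simp [wInv]
  have hV2pos : 0 < (wInv Qt w₂).length := by
    rw [hVlen]; exact List.length_pos_iff.mpr hW2
  have hV2ne : wInv Qt w₂ ≠ [] := List.length_pos_iff.mp hV2pos
  have hsplitlen : γ.length = w₁.length + (wInv Qt w₂).length := by
    rw [hsplit, List.length_append]
  have hW1pos : 0 < w₁.length := List.length_pos_iff.mpr hW1
  -- a = x₁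
  have hw10 : w₁[0]'hW1pos = γ[0]'hγ0lt := by
    rw [gelem_eq hsplit (i := 0) (by simp only [List.length_append]; omega),
      List.getElem_append_left hW1pos]
  have ha : a = x₁ := by
    have := walk_src hw1 hW1
    rw [← List.getElem_zero hW1pos] at this
    rw [← this, hw10, hg0]
    simp only [Letter.src]
    exact hs11
  -- b = tgt of last letter of w₁
  have hW1sub : w₁.length - 1 < w₁.length := by omega
  have hb : (w₁[w₁.length - 1]'hW1sub).tgt = b := by
    have := walk_tgt hw1 hW1
    rw [List.getLast_eq_getElem] at this
    exact this
  -- rule out p = []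
  rcases eq_or_ne p [] with rfl | hpne
  · have hab : a = b := walk_nil hp
    have hblt : w₁.length - 1 < γ.length := by omega
    have hw1last : w₁[w₁.length - 1]'hW1sub = γ[w₁.length - 1]'hblt := by
      rw [gelem_eq hsplit (i := w₁.length - 1) (by simp only [List.length_append]; omega),
        List.getElem_append_left hW1sub]
    have htgt1 : (γ[w₁.length - 1]'hblt).tgt = x₁ := by
      rw [← hw1last, hb, ← hab, ha]
    have htgt2 : (γ[γ.length - 1]'hglastlt).tgt = x₁ := by
      rw [hglast]
      simp only [Letter.tgt]
      exact hs12
    have := hγsimple (a₁ := ⟨w₁.length - 1, hblt⟩) (a₂ := ⟨γ.length - 1, hglastlt⟩)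
      (by simp only [List.get_eq_getElem]; rw [htgt1, htgt2])
    have hval : w₁.length - 1 = γ.length - 1 := by
      simpa using congrArg Fin.val this
    omega
  -- main case: all of w₁, w₂, p nonempty
  have hPne : wInv Qt (pW Qt p) ≠ [] := by
    rw [wInv_pW]
    simp [hpne]
  have hPb : ∀ l ∈ wInv Qt (pW Qt p), l.isFwd = false := by
    rw [wInv_pW]
    intro l hl
    rw [List.mem_reverse, List.mem_map] at hl
    obtain ⟨c, -, rfl⟩ := hl
    rfl
  have hw1head : ∀ (h : 0 < w₁.length), (w₁[0]'h).isFwd = true := by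
    intro h
    rw [hw10, hg0]
    rfl
  have noFT1 := noFT_left hW1 hPne hPb hw1head hs1
  have hpWf : ∀ l ∈ pW Qt p, l.isFwd = true := by
    intro l hl
    simp only [pW, List.mem_map] at hl
    obtain ⟨c, -, rfl⟩ := hl
    rfl
  have hpWne : pW Qt p ≠ [] := by simp [pW, hpne]
  have hV2last : ∀ (h : 0 < (wInv Qt w₂).length),
      ((wInv Qt w₂)[(wInv Qt w₂).length - 1]'(Nat.sub_lt h one_pos)).isFwd = false := by
    intro h
    have hidx : γ.length - 1 < γ.length := hglastlt
    have : (wInv Qt w₂)[(wInv Qt w₂).length - 1]'(Nat.sub_lt h one_pos) =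
        γ[γ.length - 1]'hglastlt := by
      rw [gelem_eq hsplit (i := γ.length - 1) (by simp only [List.length_append]; omega)]
      rw [List.getElem_append_right (by omega : w₁.length ≤ γ.length - 1)]
      exact (gelem_congr _ (by omega) _).symm
    rw [this, hglast]
    rfl
  have noFT2 := noFT_right hpWne hV2ne hpWf hV2last hs2
  -- the F-T transition of γ at position p₁₁.length + p₂₁.length - 1
  have hLbwd : (γ[p₁₁.length + p₂₁.length - 1]'hLlt).isFwd = false := by rw [hgL]; rfl
  have hL1fwd : (γ[p₁₁.length + p₂₁.length]'hL1lt).isFwd = true := by rw [hgL1]; rfl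
  have hLsucc : p₁₁.length + p₂₁.length - 1 + 1 = p₁₁.length + p₂₁.length := by omega
  rcases lt_trichotomy (p₁₁.length + p₂₁.length) w₁.length with hlt | heq | hgt
  · -- transition inside w₁ : contradiction with noFT1
    refine noFT1 (p₁₁.length + p₂₁.length - 1) (by omega) ?_ ?_
    · rw [gelem_eq hsplit (i := p₁₁.length + p₂₁.length - 1)
        (by simp only [List.length_append]; omega),
        List.getElem_append_left (by omega : p₁₁.length + p₂₁.length - 1 < w₁.length)] at hLbwd
      exact hLbwd
    · rw [gelem_eq hsplit (i := p₁₁.length + p₂₁.length)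
        (by simp only [List.length_append]; omega),
        List.getElem_append_left (by omega : p₁₁.length + p₂₁.length < w₁.length)] at hL1fwd
      rw [gelem_congr' w₁ (p₁₁.length + p₂₁.length - 1 + 1) (p₁₁.length + p₂₁.length)
        hLsucc (by omega)]
      exact hL1fwd
  · -- the boundary case: b = x₂, contradiction with triangularity of Q
    have hbx2 : b = x₂ := by
      rw [← hb]
      have : w₁[w₁.length - 1]'hW1sub = γ[p₁₁.length + p₂₁.length - 1]'hLlt := by
        rw [gelem_congr' w₁ (w₁.length - 1) (p₁₁.length + p₂₁.length - 1) (by omega)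
          (by omega)]
        rw [gelem_eq hsplit (i := p₁₁.length + p₂₁.length - 1)
          (by simp only [List.length_append]; omega)]
        rw [List.getElem_append_left (by omega : p₁₁.length + p₂₁.length - 1 < w₁.length)]
      rw [this, hgL]
      simp only [Letter.tgt]
      exact hs21
    subst ha hbx2
    have hmap := dirPath_map F hp
    rw [hFx.1, hFx.2] at hmap
    have := hQ _ _ hmap
    simp [hpne] at this
  · -- transition inside wInv w₂ : contradiction with noFT2
    refine noFT2 (p₁₁.length + p₂₁.length - 1 - w₁.length) (by omega) ?_ ?_
    · rw [gelem_eq hsplit (i := p₁₁.length + p₂₁.length - 1)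
        (by simp only [List.length_append]; omega),
        List.getElem_append_right (by omega : w₁.length ≤ p₁₁.length + p₂₁.length - 1)] at hLbwd
      exact hLbwd
    · rw [gelem_eq hsplit (i := p₁₁.length + p₂₁.length)
        (by simp only [List.length_append]; omega),
        List.getElem_append_right (by omega : w₁.length ≤ p₁₁.length + p₂₁.length)] at hL1fwd
      rw [gelem_congr' (wInv Qt w₂) (p₁₁.length + p₂₁.length - 1 - w₁.length + 1)
        (p₁₁.length + p₂₁.length - w₁.length) (by omega) (by omega)]
      exact hL1fwd

end BQ
end
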